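/- Let K be a field of characteristic 0, n ≥ 3, and 1 ≤ ℓ ≤ n−2. For the permutation w = (n, ℓ, n−1, n−2, …, ℓ+1, ℓ−1, …, 1) ∈ S_n (w_1 = n, w_2 = ℓ, and w_3 > … > w_n the decreasing arrangement of {1,…,n−1} ∖ {ℓ}), the restricted matching field ideal F_{n,ℓ,w} is nonzero and monomial-free, i.e. w ∈ T_{n,ℓ}. -/

import Mathlib

open MvPolynomial

/-- Index type for the Plücker variables `P_J`: nonempty proper subsets of `{1,…,n}`
(encoded as `Fin n`, where `i : Fin n` stands for the value `i+1`). -/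
abbrev PIdx (n : ℕ) := {J : Finset (Fin n) // J.Nonempty ∧ J ≠ Finset.univ}

/-- The transposition (1 2) acting on (1-based) row indices. -/
def swap12 (r : ℕ) : ℕ := if r = 1 then 2 else if r = 2 then 1 else r

/-- The image of the Plücker variable `P_J` under the monomial map `φ_ℓ` associated to the
block diagonal matching field `B_ℓ`: writing `J = {j_1 < … < j_k}` (as 1-based values),
it is `sgn(σ)·x_{σ(1),j_1}⋯x_{σ(k),j_k}` where `σ = id` if `|J| = 1` or
`|J ∩ {1,…,ℓ}| ≥ 2`, and `σ = (1 2)` otherwise. Variables `x_{i,j}` are indexed by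
pairs of 1-based natural numbers. -/
noncomputable def phiVal (K : Type*) [CommRing K] (n ℓ : ℕ) (J : Finset (Fin n)) :
    MvPolynomial (ℕ × ℕ) K :=
  let l : List ℕ := (J.sort (· ≤ ·)).map (fun j => (j : ℕ) + 1)
  if J.card = 1 ∨ 2 ≤ (J.filter (fun j : Fin n => (j : ℕ) + 1 ≤ ℓ)).card then
    ((List.range l.length).map
      (fun r => (X (r + 1, l.getD r 0) : MvPolynomial (ℕ × ℕ) K))).prod
  else
    - ((List.range l.length).map
      (fun r => (X (swap12 (r + 1), l.getD r 0) : MvPolynomial (ℕ × ℕ) K))).prod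

/-- The monomial map `φ_ℓ : K[P_J] → K[x_{i,j}]`. -/
noncomputable def phiMap (K : Type*) [CommRing K] (n ℓ : ℕ) :
    MvPolynomial (PIdx n) K →ₐ[K] MvPolynomial (ℕ × ℕ) K :=
  aeval (fun J => phiVal K n ℓ J.1)

/-- The matching field ideal `F_{n,ℓ} = ker φ_ℓ`. -/
noncomputable def Fnl (K : Type*) [CommRing K] (n ℓ : ℕ) :
    Ideal (MvPolynomial (PIdx n) K) :=
  RingHom.ker (phiMap K n ℓ)

/-- Componentwise comparison `A ≤ B` of two finsets via their increasing enumerations. -/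
def finsetLE {n : ℕ} (A B : Finset (Fin n)) : Prop :=
  List.Forall₂ (· ≤ ·) (A.sort (· ≤ ·)) (B.sort (· ≤ ·))

/-- The set `{w_1, …, w_k}` of the first `k` values of the one-line notation of `w`. -/
def initSet {n : ℕ} (w : Equiv.Perm (Fin n)) (k : ℕ) : Finset (Fin n) :=
  (Finset.univ.filter (fun i : Fin n => (i : ℕ) < k)).image w

/-- `S_w`: the set of subsets `J` with `J ≰ {w_1,…,w_{|J|}}`. -/
def Sw {n : ℕ} (w : Equiv.Perm (Fin n)) : Set (Finset (Fin n)) :=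
  {J | ¬ finsetLE J (initSet w J.card)}

/-- Index type for the Plücker variables that do not vanish on the Schubert variety `X(w)`. -/
abbrev RIdx (n : ℕ) (w : Equiv.Perm (Fin n)) := {J : PIdx n // J.1 ∉ Sw w}

open Classical in
/-- The projection `π_w` sending `P_J ↦ 0` for `J ∈ S_w` and `P_J ↦ P_J` otherwise. -/
noncomputable def piw (K : Type*) [CommRing K] {n : ℕ} (w : Equiv.Perm (Fin n)) :
    MvPolynomial (PIdx n) K →ₐ[K] MvPolynomial (RIdx n w) K :=
  aeval (fun J => if h : J.1 ∈ Sw w then 0 else X (⟨J, h⟩ : RIdx n w))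

/-- The restricted matching field ideal `F_{n,ℓ,w} = π_w(F_{n,ℓ})`. -/
noncomputable def Fnlw (K : Type*) [CommRing K] (n ℓ : ℕ) (w : Equiv.Perm (Fin n)) :
    Ideal (MvPolynomial (RIdx n w) K) :=
  Ideal.map (piw K w) (Fnl K n ℓ)

/-- An ideal of a polynomial ring is monomial-free if it contains no (nonzero) monomial. -/
def MonomialFree {σ K : Type*} [CommSemiring K] (I : Ideal (MvPolynomial σ K)) : Prop :=
  ∀ m : σ →₀ ℕ, (monomial m (1 : K)) ∉ I

/-- The adjacent transposition `s_{i+1} = (i+1, i+2)` (1-based), i.e. the swap of the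
0-based positions `i` and `i+1` of `Fin n`. -/
def adjT (n i : ℕ) : Equiv.Perm (Fin n) :=
  if h : i + 1 < n then Equiv.swap ⟨i, Nat.lt_of_succ_lt h⟩ ⟨i + 1, h⟩ else 1

/-- `Z_n`: permutations that are products of adjacent transpositions with pairwise
distance at least 2 between the indices. -/
def Zset (n : ℕ) : Set (Equiv.Perm (Fin n)) :=
  {w | ∃ l : List ℕ, (∀ i ∈ l, i + 1 < n) ∧
        l.Pairwise (fun i j => i + 2 ≤ j ∨ j + 2 ≤ i) ∧
        w = (l.map (adjT n)).prod}

/-- `oneLine w i = w_i` : the `i`-th entry (1-based, with 1-based values) of the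
one-line notation of `w`. -/
def oneLine {n : ℕ} (w : Equiv.Perm (Fin n)) (i : ℕ) : ℕ :=
  if h : i - 1 < n then (w ⟨i - 1, h⟩ : ℕ) + 1 else 0

/-- The (1-based) position `t` with `w_t = n`. -/
def posOfTop {n : ℕ} (w : Equiv.Perm (Fin n)) : ℕ :=
  if h : 0 < n then ((w.symm ⟨n - 1, by omega⟩ : ℕ) + 1) else 0

/-- `deleteTop w u` holds iff `u = ul(w)` is obtained from `w` by deleting the entry `n`
from its one-line notation. -/
def deleteTop {n : ℕ} (w : Equiv.Perm (Fin n)) (u : Equiv.Perm (Fin (n - 1))) : Prop :=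
  ∀ i, 1 ≤ i → i ≤ n - 1 →
    oneLine u i = if i < posOfTop w then oneLine w i else oneLine w (i + 1)

/-- The descending property: writing `w_t = n`, one has `w_t > w_{t+1} > … > w_n`. -/
def descendingProp {n : ℕ} (w : Equiv.Perm (Fin n)) : Prop :=
  ∀ i, posOfTop w ≤ i → i < n → oneLine w (i + 1) < oneLine w i

/-- `T_{n,ℓ}`: the set of permutations `w` for which `F_{n,ℓ,w}` is nonzero and
monomial-free. -/
def Tset (K : Type*) [Field K] (n ℓ : ℕ) : Set (Equiv.Perm (Fin n)) :=
  {w | Fnlw K n ℓ w ≠ ⊥ ∧ MonomialFree (Fnlw K n ℓ w)}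

/-- The one-line notation of `w` as a list of 1-based values. -/
def olList {n : ℕ} (w : Equiv.Perm (Fin n)) : List ℕ :=
  (List.finRange n).map (fun i => (w i : ℕ) + 1)

/-- A list of naturals is 312-free if it has no subsequence of type 312. -/
def List312Free (l : List ℕ) : Prop :=
  ¬ ∃ i j k : ℕ, i < j ∧ j < k ∧ k < l.length ∧
      l.getD j 0 < l.getD k 0 ∧ l.getD k 0 < l.getD i 0

/-- The decreasing list `[a, a-1, …, 1]`. -/
def descTo1 (a : ℕ) : List ℕ := (List.range a).reverse.map (· + 1)

/-- The set `P_ℓ ⊆ S_n`. -/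
def Pset (n ℓ : ℕ) : Set (Equiv.Perm (Fin n)) :=
  if ℓ = n then {w | List312Free (olList w)}
  else
    {w | (¬ List312Free (olList w) →
            oneLine w 2 = ℓ ∧ oneLine w 2 < oneLine w 1 ∧
            List312Free ((olList w).erase ℓ)) ∧
         (∀ m, 3 ≤ m → m ≤ n →
            (olList w).filter (fun v => v ≤ m) = (m - 1) :: m :: descTo1 (m - 2) →
            oneLine w 1 < oneLine w 2 ∧ oneLine w 2 ≤ ℓ ∧
            (olList w).filter (fun v => v ≤ oneLine w 2) =
              oneLine w 1 :: oneLine w 2 ::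
                ((descTo1 (oneLine w 2 - 1)).filter (fun v => v ≠ oneLine w 1)))}

/-- The set `A_1`. -/
def A1set (n : ℕ) : Set (Equiv.Perm (Fin n)) :=
  {w | (∃ u : Equiv.Perm (Fin (n - 1)), deleteTop w u ∧ u ∈ Zset (n - 1)) ∧
       oneLine w n = n - 2 ∧
       ({oneLine w (n - 2), oneLine w (n - 1)} : Set ℕ) = {n - 1, n}}

/-- The set `A_2` (with `ul(w) ∈ T_{n-1,ℓ'}`). -/
def A2set (K : Type*) [Field K] (n ℓ' : ℕ) : Set (Equiv.Perm (Fin n)) :=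
  {w | (∃ u : Equiv.Perm (Fin (n - 1)),
          deleteTop w u ∧ u ∈ Tset K (n - 1) ℓ' ∧ descendingProp u) ∧
       (∀ s t, 1 ≤ s → s ≤ n → 1 ≤ t → t ≤ n →
          oneLine w s = n - 1 → oneLine w t = n → s - 1 ≤ t)}

section Helpers
open Finset

lemma descTo1_succ (a : ℕ) : descTo1 (a+1) = (a+1) :: descTo1 a := by
  simp [descTo1, List.range_succ]

lemma descTo1_getD (b m : ℕ) : (descTo1 b).getD m 0 = b - m := by
  induction b generalizing m with
  | zero => simp [descTo1]
  | succ b ih =>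
    rw [descTo1_succ]
    cases m with
    | zero => simp
    | succ m => simpa using ih m

lemma mem_descTo1 {b x : ℕ} (h : x ∈ descTo1 b) : x ≤ b := by
  induction b with
  | zero => simp [descTo1] at h
  | succ b ih =>
    rw [descTo1_succ] at h
    rcases List.mem_cons.1 h with h | h
    · omega
    · exact le_trans (ih h) (by omega)

lemma filter_descTo1_getD (ℓ : ℕ) (h1 : 1 ≤ ℓ) : ∀ a, ℓ ≤ a → ∀ m,
    ((descTo1 a).filter (fun v => v ≠ ℓ)).getD m 0 =
      if m + ℓ + 1 ≤ a then a - m else a - m - 1 := by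
  refine Nat.le_induction ?_ ?_
  · intro m
    obtain ⟨c, rfl⟩ : ∃ c, ℓ = c + 1 := ⟨ℓ - 1, by omega⟩
    rw [descTo1_succ]
    have : (descTo1 c).filter (fun v => v ≠ c + 1) = descTo1 c := by
      apply List.filter_eq_self.2
      intro x hx
      have := mem_descTo1 hx
      simp; omega
    rw [List.filter_cons, if_neg (by simp), this, descTo1_getD, if_neg (by omega)]
    omega
  · intro a ha ih m
    rw [descTo1_succ, List.filter_cons, if_pos (by simp only [ne_eq, decide_eq_true_eq]; omega)]
    cases m with
    | zero => rw [List.getD_cons_zero, if_pos (by omega)]; omega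
    | succ m =>
      rw [List.getD_cons_succ, ih m]
      by_cases hc : m + ℓ + 1 ≤ a
      · rw [if_pos hc, if_pos (by omega)]; omega
      · rw [if_neg hc, if_neg (by omega)]; omega

end Helpers
section Counting
open Finset

lemma card_filter_ge_fin (n t : ℕ) (ht : t ≤ n) :
    (univ.filter (fun v : Fin n => t ≤ (v : ℕ))).card = n - t := by
  have himg : univ.filter (fun v : Fin n => t ≤ (v : ℕ)) =
      (univ : Finset (Fin (n - t))).image (fun j : Fin (n - t) => (⟨t + (j : ℕ), by omega⟩ : Fin n)) := by
    ext v
    simp only [mem_filter, mem_univ, true_and, mem_image]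
    constructor
    · intro hv
      exact ⟨⟨(v : ℕ) - t, by omega⟩, by apply Fin.ext; simp; omega⟩
    · rintro ⟨j, rfl⟩; simp
  rw [himg, card_image_of_injective _ (fun a b hab => by
    apply Fin.ext
    have := congrArg (fun x : Fin n => (x : ℕ)) hab
    simpa using this), card_univ, Fintype.card_fin]

lemma card_filter_lt_fin (n t : ℕ) (ht : t ≤ n) :
    (univ.filter (fun v : Fin n => (v : ℕ) < t)).card = t := by
  have h2 := card_filter_ge_fin n t ht
  have h3 := card_filter_add_card_filter_not (s := (univ : Finset (Fin n)))
    (p := fun v : Fin n => t ≤ (v : ℕ))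
  simp only [card_univ, Fintype.card_fin, not_le] at h3
  omega

variable {n k : ℕ} {s : Finset (Fin n)} (hs : s.card = k)

lemma count_ge_emb (i : Fin k) :
    k - (i : ℕ) ≤ (s.filter (fun v : Fin n => ((s.orderEmbOfFin hs i : Fin n) : ℕ) ≤ (v : ℕ))).card := by
  set e := s.orderEmbOfFin hs
  have hsub : (univ.filter (fun j : Fin k => (i : ℕ) ≤ (j : ℕ))).image (fun j => e j) ⊆
      s.filter (fun v : Fin n => ((e i : Fin n) : ℕ) ≤ (v : ℕ)) := by
    intro v hv
    obtain ⟨j, hj, rfl⟩ := mem_image.1 hv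
    simp only [mem_filter, mem_univ, true_and] at hj
    refine mem_filter.2 ⟨Finset.orderEmbOfFin_mem s hs j, ?_⟩
    exact Fin.le_iff_val_le_val.1 (e.monotone (by exact Fin.le_iff_val_le_val.2 hj))
  calc k - (i : ℕ) = (univ.filter (fun j : Fin k => (i : ℕ) ≤ (j : ℕ))).card :=
        (card_filter_ge_fin k i (le_of_lt i.isLt)).symm
    _ = ((univ.filter (fun j : Fin k => (i : ℕ) ≤ (j : ℕ))).image (fun j => e j)).card :=
        (card_image_of_injective _ e.injective).symm
    _ ≤ _ := card_le_card hsub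

lemma emb_le_of_count (i : Fin k) (t : ℕ)
    (h : k - (i : ℕ) ≤ (s.filter (fun v : Fin n => t ≤ (v : ℕ))).card) :
    t ≤ ((s.orderEmbOfFin hs i : Fin n) : ℕ) := by
  set e := s.orderEmbOfFin hs with he
  by_contra hlt
  push_neg at hlt
  have hsub : s.filter (fun v : Fin n => t ≤ (v : ℕ)) ⊆
      (univ.filter (fun j : Fin k => (i : ℕ) < (j : ℕ))).image (fun j => e j) := by
    intro v hv
    obtain ⟨hvs, hvt⟩ := mem_filter.1 hv
    have : v ∈ Set.range e := by rw [he, Finset.range_orderEmbOfFin]; exact hvs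
    obtain ⟨j, rfl⟩ := this
    refine mem_image.2 ⟨j, mem_filter.2 ⟨mem_univ _, ?_⟩, rfl⟩
    by_contra hji
    push_neg at hji
    have : (e j : ℕ) ≤ (e i : ℕ) :=
      Fin.le_iff_val_le_val.1 (e.monotone (Fin.le_iff_val_le_val.2 hji))
    omega
  have hcard := card_le_card hsub
  have h1 : ((univ.filter (fun j : Fin k => (i : ℕ) < (j : ℕ))).image (fun j => e j)).card
      = k - ((i : ℕ) + 1) := by
    rw [card_image_of_injective _ e.injective]
    have : (univ.filter (fun j : Fin k => (i : ℕ) < (j : ℕ)))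
        = (univ.filter (fun j : Fin k => (i : ℕ) + 1 ≤ (j : ℕ))) := by
      apply filter_congr; intro j _; exact Nat.lt_iff_add_one_le
    rw [this, card_filter_ge_fin k ((i : ℕ) + 1) i.isLt]
  have := i.isLt
  omega

lemma emb_le_of_count_le (i : Fin k) (t : ℕ)
    (h : (i : ℕ) + 1 ≤ (s.filter (fun v : Fin n => (v : ℕ) ≤ t)).card) :
    ((s.orderEmbOfFin hs i : Fin n) : ℕ) ≤ t := by
  set e := s.orderEmbOfFin hs with he
  by_contra hlt
  push_neg at hlt
  have hsub : s.filter (fun v : Fin n => (v : ℕ) ≤ t) ⊆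
      (univ.filter (fun j : Fin k => (j : ℕ) < (i : ℕ))).image (fun j => e j) := by
    intro v hv
    obtain ⟨hvs, hvt⟩ := mem_filter.1 hv
    have : v ∈ Set.range e := by rw [he, Finset.range_orderEmbOfFin]; exact hvs
    obtain ⟨j, rfl⟩ := this
    refine mem_image.2 ⟨j, mem_filter.2 ⟨mem_univ _, ?_⟩, rfl⟩
    by_contra hji
    push_neg at hji
    have : (e i : ℕ) ≤ (e j : ℕ) :=
      Fin.le_iff_val_le_val.1 (e.monotone (Fin.le_iff_val_le_val.2 hji))
    omega
  have hcard := card_le_card hsub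
  have h1 : ((univ.filter (fun j : Fin k => (j : ℕ) < (i : ℕ))).image (fun j => e j)).card
      = (i : ℕ) := by
    rw [card_image_of_injective _ e.injective,
      card_filter_lt_fin k (i : ℕ) (le_of_lt i.isLt)]
  omega

lemma emb_add_le (i : Fin k) : ((s.orderEmbOfFin hs i : Fin n) : ℕ) + (k - (i : ℕ)) ≤ n := by
  have h1 := count_ge_emb hs i
  have h2 : (s.filter (fun v : Fin n => ((s.orderEmbOfFin hs i : Fin n) : ℕ) ≤ (v : ℕ))).card ≤
      n - ((s.orderEmbOfFin hs i : Fin n) : ℕ) := by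
    rw [← card_filter_ge_fin n ((s.orderEmbOfFin hs i : Fin n) : ℕ)
      (le_of_lt (s.orderEmbOfFin hs i).isLt)]
    exact card_le_card (fun v hv => mem_filter.2 ⟨mem_univ _, (mem_filter.1 hv).2⟩)
  have := (s.orderEmbOfFin hs i).isLt
  omega

end Counting
section FinsetLE
open Finset

lemma sort_get_eq_emb {n k : ℕ} (s : Finset (Fin n)) (hs : s.card = k) (i : ℕ)
    (hi : i < (s.sort (· ≤ ·)).length) :
    (s.sort (· ≤ ·)).get ⟨i, hi⟩ = s.orderEmbOfFin hs ⟨i, by rwa [Finset.length_sort, hs] at hi⟩ := by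
  rw [Finset.orderEmbOfFin_apply]
  simp [List.get_eq_getElem]

lemma finsetLE_of_count {n k : ℕ} (A B : Finset (Fin n)) (hA : A.card = k) (hB : B.card = k)
    (h : ∀ t : ℕ, t < n →
      (A.filter (fun v : Fin n => t ≤ (v : ℕ))).card ≤
      (B.filter (fun v : Fin n => t ≤ (v : ℕ))).card) :
    finsetLE A B := by
  rw [finsetLE, List.forall₂_iff_get]
  refine ⟨by rw [Finset.length_sort, Finset.length_sort, hA, hB], ?_⟩
  intro i h1 h2
  rw [sort_get_eq_emb A hA i h1, sort_get_eq_emb B hB i h2]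
  set iA : Fin k := ⟨i, by rwa [Finset.length_sort, hA] at h1⟩
  set t : ℕ := ((A.orderEmbOfFin hA iA : Fin n) : ℕ)
  have hcA : k - (iA : ℕ) ≤ (A.filter (fun v : Fin n => t ≤ (v : ℕ))).card := count_ge_emb hA iA
  have ht : t < n := (A.orderEmbOfFin hA iA).isLt
  have hcB := le_trans hcA (h t ht)
  exact Fin.le_iff_val_le_val.2 (emb_le_of_count hB ⟨i, by rwa [Finset.length_sort, hB] at h2⟩ t hcB)

lemma finsetLE_min' {n : ℕ} {A B : Finset (Fin n)} (h : finsetLE A B) (hA : A.Nonempty)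
    (hB : B.Nonempty) : A.min' hA ≤ B.min' hB := by
  rw [finsetLE] at h
  have hlen := h.length_eq
  have h0A : 0 < (A.sort (· ≤ ·)).length := by
    rw [Finset.length_sort]; exact Finset.card_pos.2 hA
  have h0B : 0 < (B.sort (· ≤ ·)).length := by omega
  have := h.get (i := 0) h0A h0B
  rw [Finset.sorted_zero_eq_min'_aux A h0A hA, Finset.sorted_zero_eq_min'_aux B h0B hB] at this
  exact this

end FinsetLE
section WFacts
open Finset

variable {n ℓ : ℕ} {w : Equiv.Perm (Fin n)}

lemma wval (hw : olList w = n :: ℓ :: ((descTo1 (n - 1)).filter (fun v => v ≠ ℓ)))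
    (i : Fin n) :
    ((w i : ℕ)) + 1 = (n :: ℓ :: ((descTo1 (n - 1)).filter (fun v => v ≠ ℓ))).getD (i : ℕ) 0 := by
  have hlen : (olList w).length = n := by simp [olList]
  have hkey : (olList w).getD (i : ℕ) 0 = (w i : ℕ) + 1 := by
    rw [List.getD_eq_getElem _ _ (by rw [hlen]; exact i.isLt)]
    simp [olList]
  rw [← hkey, hw]

lemma P0 (hn : 3 ≤ n) (hw : olList w = n :: ℓ :: ((descTo1 (n - 1)).filter (fun v => v ≠ ℓ))) :
    w ⟨0, by omega⟩ = ⟨n - 1, by omega⟩ := by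
  have := wval hw ⟨0, by omega⟩
  simp only [List.getD_cons_zero] at this
  apply Fin.ext
  simp only [] at this ⊢
  omega

lemma P1 (hn : 3 ≤ n) (h1 : 1 ≤ ℓ) (h2 : ℓ ≤ n - 2) (hw : olList w = n :: ℓ :: ((descTo1 (n - 1)).filter (fun v => v ≠ ℓ))) :
    w ⟨1, by omega⟩ = ⟨ℓ - 1, by omega⟩ := by
  have := wval hw ⟨1, by omega⟩
  simp only [List.getD_cons_succ, List.getD_cons_zero] at this
  apply Fin.ext
  simp only [] at this ⊢
  omega

lemma Pgt (hn : 3 ≤ n) (h1 : 1 ≤ ℓ) (h2 : ℓ ≤ n - 2)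
    (hw : olList w = n :: ℓ :: ((descTo1 (n - 1)).filter (fun v => v ≠ ℓ)))
    (v : Fin n) (hv1 : ℓ ≤ (v : ℕ)) (hv2 : (v : ℕ) ≤ n - 2) :
    w ⟨n - (v : ℕ), by omega⟩ = v := by
  have hkey := wval hw ⟨n - (v : ℕ), by omega⟩
  have hidx : (((⟨n - (v : ℕ), by omega⟩ : Fin n)) : ℕ) = (n - (v : ℕ) - 2) + 2 := by
    simp only []; omega
  rw [hidx, List.getD_cons_succ, List.getD_cons_succ,
    filter_descTo1_getD ℓ h1 (n - 1) (by omega), if_pos (by omega)] at hkey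
  apply Fin.ext
  omega

lemma Plt (hn : 3 ≤ n) (h1 : 1 ≤ ℓ) (h2 : ℓ ≤ n - 2)
    (hw : olList w = n :: ℓ :: ((descTo1 (n - 1)).filter (fun v => v ≠ ℓ)))
    (v : Fin n) (hv1 : (v : ℕ) + 1 < ℓ) :
    w ⟨n - (v : ℕ) - 1, by omega⟩ = v := by
  have hkey := wval hw ⟨n - (v : ℕ) - 1, by omega⟩
  have hidx : (((⟨n - (v : ℕ) - 1, by omega⟩ : Fin n)) : ℕ) = (n - (v : ℕ) - 3) + 2 := by
    simp only []; omega
  rw [hidx, List.getD_cons_succ, List.getD_cons_succ,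
    filter_descTo1_getD ℓ h1 (n - 1) (by omega), if_neg (by omega)] at hkey
  apply Fin.ext
  omega

lemma memInit {k : ℕ} (i : Fin n) (hik : (i : ℕ) < k) : w i ∈ initSet w k :=
  Finset.mem_image.2 ⟨i, Finset.mem_filter.2 ⟨Finset.mem_univ _, hik⟩, rfl⟩

lemma IS0 (hn : 3 ≤ n) (hw : olList w = n :: ℓ :: ((descTo1 (n - 1)).filter (fun v => v ≠ ℓ)))
    {k : ℕ} (hk : 1 ≤ k) : (⟨n - 1, by omega⟩ : Fin n) ∈ initSet w k := by
  rw [← P0 hn hw]; exact memInit _ (by show (0:ℕ) < k; omega)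

lemma IS2 (hn : 3 ≤ n) (h1 : 1 ≤ ℓ) (h2 : ℓ ≤ n - 2) (hw : olList w = n :: ℓ :: ((descTo1 (n - 1)).filter (fun v => v ≠ ℓ)))
    {k : ℕ} (hk : 2 ≤ k) : (⟨ℓ - 1, by omega⟩ : Fin n) ∈ initSet w k := by
  rw [← P1 hn h1 h2 hw]; exact memInit _ (by show (1:ℕ) < k; omega)

lemma IS1 (hn : 3 ≤ n) (h1 : 1 ≤ ℓ) (h2 : ℓ ≤ n - 2)
    (hw : olList w = n :: ℓ :: ((descTo1 (n - 1)).filter (fun v => v ≠ ℓ)))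
    {k : ℕ} (hk : 2 ≤ k) (hkn : k ≤ n) (v : Fin n) (hv : n - k + 1 ≤ (v : ℕ)) :
    v ∈ initSet w k := by
  by_cases hv1 : (v : ℕ) = n - 1
  · have : v = (⟨n - 1, by omega⟩ : Fin n) := Fin.ext (by simpa using hv1)
    rw [this]; exact IS0 hn hw (by omega)
  by_cases hv2 : (v : ℕ) = ℓ - 1
  · have : v = (⟨ℓ - 1, by omega⟩ : Fin n) := Fin.ext (by simpa using hv2)
    rw [this]; exact IS2 hn h1 h2 hw hk
  have hvlt := v.isLt
  by_cases hc : ℓ ≤ (v : ℕ)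
  · rw [← Pgt hn h1 h2 hw v hc (by omega)]
    exact memInit _ (by simp only []; omega)
  · rw [← Plt hn h1 h2 hw v (by omega)]
    exact memInit _ (by simp only []; omega)

lemma IS3 (hn : 3 ≤ n) (h1 : 1 ≤ ℓ) (h2 : ℓ ≤ n - 2)
    (hw : olList w = n :: ℓ :: ((descTo1 (n - 1)).filter (fun v => v ≠ ℓ)))
    {k : ℕ} (hk : 2 ≤ k) (hkn : k ≤ n) (hkl : n - k + 1 ≤ ℓ - 1) (v : Fin n)
    (hv : n - k ≤ (v : ℕ)) : v ∈ initSet w k := by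
  by_cases hc : n - k + 1 ≤ (v : ℕ)
  · exact IS1 hn h1 h2 hw hk hkn v hc
  · have hveq : (v : ℕ) = n - k := by omega
    rw [← Plt hn h1 h2 hw v (by omega)]
    exact memInit _ (by simp only []; omega)

lemma card_initSet {k : ℕ} (hkn : k ≤ n) : (initSet w k).card = k := by
  rw [initSet, Finset.card_image_of_injective _ w.injective]
  exact card_filter_lt_fin n k hkn

end WFacts
section SwFacts
open Finset

variable {n ℓ : ℕ} {w : Equiv.Perm (Fin n)}

lemma CB1 (hn : 3 ≤ n) (h1 : 1 ≤ ℓ) (h2 : ℓ ≤ n - 2)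
    (hw : olList w = n :: ℓ :: ((descTo1 (n - 1)).filter (fun v => v ≠ ℓ)))
    {k : ℕ} (hk : 2 ≤ k) (hkn : k ≤ n) (t : ℕ) (ht : t < n) :
    min (n - t) (k - 1) ≤ ((initSet w k).filter (fun v : Fin n => t ≤ (v : ℕ))).card := by
  have hsub : (univ.filter (fun v : Fin n => max t (n - k + 1) ≤ (v : ℕ))) ⊆
      (initSet w k).filter (fun v : Fin n => t ≤ (v : ℕ)) := by
    intro v hv
    simp only [mem_filter, mem_univ, true_and] at hv
    exact mem_filter.2 ⟨IS1 hn h1 h2 hw hk hkn v (by omega), by omega⟩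
  have hcard := card_le_card hsub
  rw [card_filter_ge_fin n _ (by omega)] at hcard
  omega

lemma CB2 (hn : 3 ≤ n) (h1 : 1 ≤ ℓ) (h2 : ℓ ≤ n - 2)
    (hw : olList w = n :: ℓ :: ((descTo1 (n - 1)).filter (fun v => v ≠ ℓ)))
    {k : ℕ} (hk : 2 ≤ k) (hkn : k ≤ n) (t : ℕ) (ht : t + 1 ≤ ℓ) :
    min (n - t) k ≤ ((initSet w k).filter (fun v : Fin n => t ≤ (v : ℕ))).card := by
  by_cases hc : ℓ - 1 ≤ n - k
  · have hsub : insert (⟨ℓ - 1, by omega⟩ : Fin n)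
        (univ.filter (fun v : Fin n => max t (n - k + 1) ≤ (v : ℕ))) ⊆
        (initSet w k).filter (fun v : Fin n => t ≤ (v : ℕ)) := by
      rw [insert_subset_iff]
      constructor
      · exact mem_filter.2 ⟨IS2 hn h1 h2 hw hk, by simp only []; omega⟩
      · intro v hv
        simp only [mem_filter, mem_univ, true_and] at hv
        exact mem_filter.2 ⟨IS1 hn h1 h2 hw hk hkn v (by omega), by omega⟩
    have hcard := card_le_card hsub
    rw [card_insert_of_notMem (by
      simp only [mem_filter, mem_univ, true_and, not_le]
      omega)] at hcard
    rw [card_filter_ge_fin n _ (by omega)] at hcard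
    omega
  · have hsub : (univ.filter (fun v : Fin n => max t (n - k) ≤ (v : ℕ))) ⊆
        (initSet w k).filter (fun v : Fin n => t ≤ (v : ℕ)) := by
      intro v hv
      simp only [mem_filter, mem_univ, true_and] at hv
      exact mem_filter.2 ⟨IS3 hn h1 h2 hw hk hkn (by omega) v (by omega), by omega⟩
    have hcard := card_le_card hsub
    rw [card_filter_ge_fin n _ (by omega)] at hcard
    omega

lemma notMemSw (hn : 3 ≤ n) (h1 : 1 ≤ ℓ) (h2 : ℓ ≤ n - 2)
    (hw : olList w = n :: ℓ :: ((descTo1 (n - 1)).filter (fun v => v ≠ ℓ)))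
    (J : Finset (Fin n)) (hJ : J.Nonempty)
    (hcond : J.card = 1 ∨ ((J.min' hJ : ℕ)) + 1 ≤ ℓ) : J ∉ Sw w := by
  simp only [Sw, Set.mem_setOf_eq, not_not]
  by_cases hcard : J.card = 1
  · obtain ⟨a, rfl⟩ := Finset.card_eq_one.1 hcard
    have hinit : initSet w 1 = {w ⟨0, by omega⟩} := by
      rw [initSet]
      have : (univ.filter (fun i : Fin n => (i : ℕ) < 1)) = {(⟨0, by omega⟩ : Fin n)} := by
        ext i
        simp only [mem_filter, mem_univ, true_and, mem_singleton, Fin.ext_iff]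
        omega
      rw [this, image_singleton]
    rw [card_singleton, hinit, P0 hn hw, finsetLE, Finset.sort_singleton,
      Finset.sort_singleton]
    exact List.Forall₂.cons (Fin.le_iff_val_le_val.2 (by simp only []; omega)) List.Forall₂.nil
  · have hmin : ((J.min' hJ : ℕ)) + 1 ≤ ℓ := hcond.resolve_left hcard
    have hk2 : 2 ≤ J.card := by
      have := Finset.card_pos.2 hJ; omega
    have hkn : J.card ≤ n := by
      have := Finset.card_le_univ J
      simpa using this
    apply finsetLE_of_count J _ rfl (card_initSet hkn)
    intro t ht
    have hb1 : (J.filter (fun v : Fin n => t ≤ (v : ℕ))).card ≤ J.card := card_filter_le _ _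
    have hb2 : (J.filter (fun v : Fin n => t ≤ (v : ℕ))).card ≤ n - t := by
      rw [← card_filter_ge_fin n t (by omega)]
      exact card_le_card (fun v hv => mem_filter.2 ⟨mem_univ _, (mem_filter.1 hv).2⟩)
    by_cases htl : t + 1 ≤ ℓ
    · have := CB2 hn h1 h2 hw hk2 hkn t htl
      omega
    · have hb3 : (J.filter (fun v : Fin n => t ≤ (v : ℕ))).card ≤ J.card - 1 := by
        have hsub : J.filter (fun v : Fin n => t ≤ (v : ℕ)) ⊆ J.erase (J.min' hJ) := by
          intro v hv
          obtain ⟨hvJ, hvt⟩ := mem_filter.1 hv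
          refine mem_erase.2 ⟨?_, hvJ⟩
          intro hveq
          rw [hveq] at hvt
          omega
        have := card_le_card hsub
        rwa [card_erase_of_mem (J.min'_mem hJ)] at this
      have := CB1 hn h1 h2 hw hk2 hkn t ht
      omega

lemma memSw (hn : 3 ≤ n) (h1 : 1 ≤ ℓ) (h2 : ℓ ≤ n - 2)
    (hw : olList w = n :: ℓ :: ((descTo1 (n - 1)).filter (fun v => v ≠ ℓ)))
    (J : Finset (Fin n)) (hJ : J.Nonempty) (hk2 : 2 ≤ J.card)
    (hmin : ℓ ≤ ((J.min' hJ : ℕ))) : J ∈ Sw w := by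
  simp only [Sw, Set.mem_setOf_eq]
  intro hle
  have hBne : (initSet w J.card).Nonempty := ⟨_, IS2 hn h1 h2 hw hk2⟩
  have := finsetLE_min' hle hJ hBne
  have hBmin : (initSet w J.card).min' hBne ≤ (⟨ℓ - 1, by omega⟩ : Fin n) :=
    Finset.min'_le _ _ (IS2 hn h1 h2 hw hk2)
  have h3 := le_trans this hBmin
  rw [Fin.le_iff_val_le_val] at h3
  simp only [] at h3
  omega

lemma swDichotomy (hn : 3 ≤ n) (h1 : 1 ≤ ℓ) (h2 : ℓ ≤ n - 2)
    (hw : olList w = n :: ℓ :: ((descTo1 (n - 1)).filter (fun v => v ≠ ℓ)))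
    (J : Finset (Fin n)) (hJ : J.Nonempty) (hns : J ∉ Sw w) :
    J.card = 1 ∨ ((J.min' hJ : ℕ)) + 1 ≤ ℓ := by
  by_contra hc
  push_neg at hc
  obtain ⟨hc1, hc2⟩ := hc
  have hk2 : 2 ≤ J.card := by have := Finset.card_pos.2 hJ; omega
  exact hns (memSw hn h1 h2 hw J hJ hk2 (by omega))

end SwFacts
section EV
open Finset

variable {K : Type*} [CommRing K]

lemma coe_norm {n : ℕ} (J : Finset (Fin n)) :
    (J.sort (· ≤ ·)).map (fun j => ((j : ℕ)) + 1) =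
    (J.sort (· ≤ ·)).map (fun j : Fin n => ((j : ℕ)) + 1) := by
  simp only [List.bind_eq_flatMap, List.pure_def, ← List.map_eq_flatMap, List.map_map]
  rfl

noncomputable def evK (K : Type*) [CommRing K] (ℓ : ℕ) : MvPolynomial (ℕ × ℕ) K →ₐ[K] K :=
  aeval (fun p : ℕ × ℕ => if p.1 = 2 ∧ ℓ < p.2 then (0 : K) else 1)

lemma evK_X (ℓ : ℕ) (p : ℕ × ℕ) :
    evK K ℓ (X p) = if p.1 = 2 ∧ ℓ < p.2 then (0 : K) else 1 := aeval_X _ _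

lemma lval {n k : ℕ} (J : Finset (Fin n)) (hJk : J.card = k) (r : ℕ) (hr : r < k) :
    ((J.sort (· ≤ ·)).map (fun j : Fin n => (j : ℕ) + 1)).getD r 0
      = ((J.orderEmbOfFin hJk ⟨r, hr⟩ : Fin n) : ℕ) + 1 := by
  have hlen : ((J.sort (· ≤ ·)).map (fun j : Fin n => (j : ℕ) + 1)).length = k := by
    rw [List.length_map, Finset.length_sort, hJk]
  rw [List.getD_eq_getElem _ _ (by omega), List.getElem_map, Finset.orderEmbOfFin_apply]
  rfl

lemma EV0 {n ℓ : ℕ} (J : Finset (Fin n)) (hJne : J.Nonempty) (hcard : J.card ≠ 1)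
    (hmin : ℓ ≤ ((J.min' hJne : ℕ))) : evK K ℓ (phiVal K n ℓ J) = 0 := by
  have hk1 : 0 < J.card := Finset.card_pos.2 hJne
  have hlen : ((J.sort (· ≤ ·)).map (fun j : Fin n => (j : ℕ) + 1)).length = J.card := by
    rw [List.length_map, Finset.length_sort]
  have hfil : ¬ (2 ≤ (J.filter (fun j : Fin n => (j : ℕ) + 1 ≤ ℓ)).card) := by
    have hfe : (J.filter (fun j : Fin n => (j : ℕ) + 1 ≤ ℓ)) = ∅ := by
      rw [Finset.filter_eq_empty_iff]
      intro j hj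
      have := J.min'_le j hj
      rw [Fin.le_iff_val_le_val] at this
      simp only [not_le]
      omega
    rw [hfe]
    simp
  simp only [phiVal]
  rw [coe_norm J]
  rw [if_neg (by push_neg; exact ⟨hcard, by omega⟩)]
  rw [map_neg, neg_eq_zero, map_list_prod, List.map_map]
  apply List.prod_eq_zero
  refine List.mem_map.2 ⟨0, List.mem_range.2 (by omega), ?_⟩
  simp only [Function.comp_apply, evK_X]
  rw [lval J rfl 0 hk1, Finset.orderEmbOfFin_zero rfl hk1]
  rw [if_pos ⟨by simp [swap12], by omega⟩]

lemma EV1 {n ℓ : ℕ} (hl : 1 ≤ ℓ) (J : Finset (Fin n)) (hJne : J.Nonempty)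
    (hcond : J.card = 1 ∨ ((J.min' hJne : ℕ)) + 1 ≤ ℓ) :
    evK K ℓ (phiVal K n ℓ J) = 1 ∨ evK K ℓ (phiVal K n ℓ J) = -1 := by
  have hk1 : 0 < J.card := Finset.card_pos.2 hJne
  have hlen : ((J.sort (· ≤ ·)).map (fun j : Fin n => (j : ℕ) + 1)).length = J.card := by
    rw [List.length_map, Finset.length_sort]
  by_cases hc : J.card = 1 ∨ 2 ≤ (J.filter (fun j : Fin n => (j : ℕ) + 1 ≤ ℓ)).card
  · left
    simp only [phiVal]
    rw [coe_norm J]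
    rw [if_pos hc, map_list_prod, List.map_map]
    apply List.prod_eq_one
    intro x hx
    obtain ⟨r, hr, rfl⟩ := List.mem_map.1 hx
    rw [List.mem_range, hlen] at hr
    simp only [Function.comp_apply, evK_X]
    by_cases hr1 : r = 1
    · subst hr1
      have hfil2 : 2 ≤ (J.filter (fun j : Fin n => (j : ℕ) + 1 ≤ ℓ)).card := by
        rcases hc with hc | hc
        · omega
        · exact hc
      have hle : ((J.orderEmbOfFin rfl ⟨1, hr⟩ : Fin n) : ℕ) ≤ ℓ - 1 := by
        apply emb_le_of_count_le rfl ⟨1, hr⟩ (ℓ - 1)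
        refine le_trans hfil2 (card_le_card ?_)
        intro v hv
        obtain ⟨hvJ, hvl⟩ := mem_filter.1 hv
        exact mem_filter.2 ⟨hvJ, by omega⟩
      rw [lval J rfl 1 hr]
      rw [if_neg (by push_neg; intro _; omega)]
    · rw [if_neg (by push_neg; intro habs; omega)]
  · right
    push_neg at hc
    obtain ⟨hcard, hfil⟩ := hc
    have hmin : ((J.min' hJne : ℕ)) + 1 ≤ ℓ := hcond.resolve_left hcard
    simp only [phiVal]
    rw [coe_norm J]
    rw [if_neg (by push_neg; exact ⟨hcard, by omega⟩)]
    rw [map_neg, map_list_prod, List.map_map, neg_eq_iff_eq_neg, neg_neg]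
    apply List.prod_eq_one
    intro x hx
    obtain ⟨r, hr, rfl⟩ := List.mem_map.1 hx
    rw [List.mem_range, hlen] at hr
    simp only [Function.comp_apply, evK_X]
    by_cases hr0 : r = 0
    · subst hr0
      rw [lval J rfl 0 hk1, Finset.orderEmbOfFin_zero rfl hk1]
      have hrow : ¬ (swap12 (0 + 1) = 2 ∧ ℓ < ((J.min' hJne : ℕ)) + 1) := by
        push_neg
        intro _
        omega
      rw [if_neg hrow]
    · have hrow : swap12 (r + 1) ≠ 2 := by
        simp only [swap12]
        rcases eq_or_ne r 1 with hr1 | hr1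
        · subst hr1; norm_num
        · rw [if_neg (by omega), if_neg (by omega)]; omega
      rw [if_neg (by push_neg; intro h; exact absurd h hrow)]

end EV
section Explicit
open Finset

variable {K : Type*} [CommRing K]

lemma phiVal_singleton (n ℓ : ℕ) (v : Fin n) :
    phiVal K n ℓ {v} = X (1, (v : ℕ) + 1) := by
  simp only [phiVal]
  rw [coe_norm]
  rw [if_pos (Or.inl (card_singleton v))]
  rw [Finset.sort_singleton]
  simp [List.range_succ, List.getD_cons_zero]

lemma phiVal_pair (n ℓ : ℕ) (a b : Fin n) (hab : a < b) (ha : (a : ℕ) + 1 ≤ ℓ)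
    (hb : ¬ ((b : ℕ) + 1 ≤ ℓ)) :
    phiVal K n ℓ {a, b} = - (X (2, (a : ℕ) + 1) * X (1, (b : ℕ) + 1)) := by
  have hne : a ∉ ({b} : Finset (Fin n)) := by
    simp only [mem_singleton]
    exact ne_of_lt hab
  have hcard : ({a, b} : Finset (Fin n)).card = 2 := by
    rw [card_insert_of_notMem hne, card_singleton]
  have hfil : (({a, b} : Finset (Fin n)).filter (fun j : Fin n => (j : ℕ) + 1 ≤ ℓ)) = {a} := by
    rw [filter_insert, if_pos ha, filter_singleton, if_neg hb]
    simp
  have hsort : ({a, b} : Finset (Fin n)).sort (· ≤ ·) = [a, b] := by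
    rw [Finset.sort_insert (· ≤ ·) (by
      intro x hx
      rw [mem_singleton] at hx
      subst hx
      exact le_of_lt hab) hne, Finset.sort_singleton]
  simp only [phiVal]
  rw [coe_norm]
  rw [if_neg (by
    push_neg
    constructor
    · omega
    · rw [hfil, card_singleton]; omega)]
  rw [hsort]
  simp [List.range_succ, swap12, mul_assoc]

end Explicit
theorem stmt11 (K : Type*) [Field K] [CharZero K] (n ℓ : ℕ) (hn : 3 ≤ n)
    (h1 : 1 ≤ ℓ) (h2 : ℓ ≤ n - 2) (w : Equiv.Perm (Fin n))
    (hw : olList w = n :: ℓ :: ((descTo1 (n - 1)).filter (fun v => v ≠ ℓ))) :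
    w ∈ Tset K n ℓ := by
  classical
  -- the evaluation homomorphism on the restricted polynomial ring
  set χ : MvPolynomial (RIdx n w) K →ₐ[K] K :=
    aeval (fun J : RIdx n w => evK K ℓ (phiVal K n ℓ J.1.1)) with hχ
  have hcomp : χ.comp (piw K w) = (evK K ℓ).comp (phiMap K n ℓ) := by
    apply MvPolynomial.algHom_ext
    intro J
    simp only [AlgHom.comp_apply, piw, phiMap, aeval_X]
    by_cases hJ : J.1 ∈ Sw w
    · rw [dif_pos hJ, map_zero]
      have hJne : J.1.Nonempty := J.2.1
      have hdich : ¬ (J.1.card = 1 ∨ ((J.1.min' hJne : ℕ)) + 1 ≤ ℓ) := by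
        intro hcond
        exact (notMemSw hn h1 h2 hw J.1 hJne hcond) hJ
      push_neg at hdich
      exact (EV0 J.1 hJne hdich.1 (by omega)).symm
    · rw [dif_neg hJ, hχ, aeval_X]
  have hker_le : Fnlw K n ℓ w ≤ RingHom.ker χ := by
    rw [Fnlw]
    rw [Ideal.map_le_iff_le_comap]
    intro p hp
    rw [Fnl, RingHom.mem_ker] at hp
    rw [Ideal.mem_comap, RingHom.mem_ker]
    have : χ (piw K w p) = ((evK K ℓ).comp (phiMap K n ℓ)) p := by
      rw [← hcomp]; rfl
    rw [this]
    simp [hp]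
  constructor
  · -- Fnlw ≠ ⊥
    have h0n : (0 : ℕ) < n := by omega
    have hn2 : n - 2 < n := by omega
    have hn1 : n - 1 < n := by omega
    set A : PIdx n := ⟨{⟨n - 2, hn2⟩}, Finset.singleton_nonempty _, by
      intro h
      have := congrArg Finset.card h
      simp at this
      omega⟩ with hA
    set C : PIdx n := ⟨{⟨n - 1, hn1⟩}, Finset.singleton_nonempty _, by
      intro h
      have := congrArg Finset.card h
      simp at this
      omega⟩ with hC
    have hBne : (⟨0, h0n⟩ : Fin n) ∉ ({⟨n - 1, hn1⟩} : Finset (Fin n)) := by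
      simp [Fin.ext_iff]; omega
    have hDne : (⟨0, h0n⟩ : Fin n) ∉ ({⟨n - 2, hn2⟩} : Finset (Fin n)) := by
      simp [Fin.ext_iff]; omega
    set B : PIdx n := ⟨{⟨0, h0n⟩, ⟨n - 1, hn1⟩}, Finset.insert_nonempty _ _, by
      intro h
      have := congrArg Finset.card h
      rw [Finset.card_insert_of_notMem hBne] at this
      simp at this
      omega⟩ with hB
    set D : PIdx n := ⟨{⟨0, h0n⟩, ⟨n - 2, hn2⟩}, Finset.insert_nonempty _ _, by
      intro h
      have := congrArg Finset.card h
      rw [Finset.card_insert_of_notMem hDne] at this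
      simp at this
      omega⟩ with hD
    set g : MvPolynomial (PIdx n) K := X A * X B - X C * X D with hg
    have hgker : g ∈ Fnl K n ℓ := by
      rw [Fnl, RingHom.mem_ker, hg, map_sub, map_mul, map_mul]
      simp only [phiMap, aeval_X, hA, hB, hC, hD]
      rw [phiVal_singleton, phiVal_singleton,
        phiVal_pair n ℓ _ _ (by simp [Fin.lt_iff_val_lt_val]; omega) (by simp; omega)
          (by simp; omega),
        phiVal_pair n ℓ _ _ (by simp [Fin.lt_iff_val_lt_val]; omega) (by simp; omega)
          (by simp; omega)]
      ring
    -- the four variables survive π_w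
    have hAmem : A.1 ∉ Sw w := by
      apply notMemSw hn h1 h2 hw _ (Finset.singleton_nonempty _)
      left
      exact Finset.card_singleton _
    have hCmem : C.1 ∉ Sw w := by
      apply notMemSw hn h1 h2 hw _ (Finset.singleton_nonempty _)
      left
      exact Finset.card_singleton _
    have hBmin : ((B.1.min' (Finset.insert_nonempty _ _) : ℕ)) + 1 ≤ ℓ := by
      have := Finset.min'_le B.1 ⟨0, h0n⟩ (Finset.mem_insert_self _ _)
      rw [Fin.le_iff_val_le_val] at this
      have h0 : ((B.1.min' (Finset.insert_nonempty _ _) : Fin n) : ℕ) ≤ 0 := this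
      omega
    have hBmem : B.1 ∉ Sw w :=
      notMemSw hn h1 h2 hw _ (Finset.insert_nonempty _ _) (Or.inr hBmin)
    have hDmin : ((D.1.min' (Finset.insert_nonempty _ _) : ℕ)) + 1 ≤ ℓ := by
      have := Finset.min'_le D.1 ⟨0, h0n⟩ (Finset.mem_insert_self _ _)
      rw [Fin.le_iff_val_le_val] at this
      have h0 : ((D.1.min' (Finset.insert_nonempty _ _) : Fin n) : ℕ) ≤ 0 := this
      omega
    have hDmem : D.1 ∉ Sw w :=
      notMemSw hn h1 h2 hw _ (Finset.insert_nonempty _ _) (Or.inr hDmin)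
    have hpig : piw K w g = X (⟨A, hAmem⟩ : RIdx n w) * X ⟨B, hBmem⟩
        - X ⟨C, hCmem⟩ * X ⟨D, hDmem⟩ := by
      rw [hg, map_sub, map_mul, map_mul]
      simp only [piw, aeval_X]
      rw [dif_neg hAmem, dif_neg hBmem, dif_neg hCmem, dif_neg hDmem]
    have hgne : piw K w g ≠ 0 := by
      intro h0
      have hAB : (⟨B, hBmem⟩ : RIdx n w) ≠ ⟨A, hAmem⟩ := by
        intro h
        have := congrArg (fun x : RIdx n w => x.1.1.card) h
        simp only [hA, hB] at this
        rw [Finset.card_insert_of_notMem hBne] at this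
        simp at this
      have hCA : (⟨C, hCmem⟩ : RIdx n w) ≠ ⟨A, hAmem⟩ := by
        intro h
        have := congrArg (fun x : RIdx n w => x.1.1) h
        simp only [hA, hC] at this
        rw [Finset.singleton_inj] at this
        rw [Fin.ext_iff] at this
        simp at this
        omega
      have hDA : (⟨D, hDmem⟩ : RIdx n w) ≠ ⟨A, hAmem⟩ := by
        intro h
        have := congrArg (fun x : RIdx n w => x.1.1.card) h
        simp only [hA, hD] at this
        rw [Finset.card_insert_of_notMem hDne] at this
        simp at this
      have happ : eval (fun J : RIdx n w => if J = ⟨A, hAmem⟩ then (2 : K) else 1)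
          (piw K w g) = 0 := by rw [h0, map_zero]
      rw [hpig, map_sub, map_mul, map_mul, eval_X, eval_X, eval_X, eval_X] at happ
      rw [if_pos rfl, if_neg hAB, if_neg hCA, if_neg hDA] at happ
      norm_num at happ
    intro hbot
    have : piw K w g ∈ Fnlw K n ℓ w := Ideal.mem_map_of_mem _ hgker
    rw [hbot, Ideal.mem_bot] at this
    exact hgne this
  · -- monomial-free
    intro m hm
    have hz : χ (monomial m 1) = 0 := hker_le hm
    rw [hχ, aeval_monomial, map_one, one_mul] at hz
    have hne : (m.prod fun (J : RIdx n w) (e : ℕ) =>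
        evK K ℓ (phiVal K n ℓ J.1.1) ^ e) ≠ 0 := by
      rw [Finsupp.prod]
      rw [Finset.prod_ne_zero_iff]
      intro J _
      apply pow_ne_zero
      have hJne : J.1.1.Nonempty := J.1.2.1
      have hdich := swDichotomy hn h1 h2 hw J.1.1 hJne J.2
      rcases EV1 (K := K) h1 J.1.1 hJne hdich with h | h
      · rw [h]; exact one_ne_zero
      · rw [h]; simp
    exact hne hz
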